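/- (Theorem 3) Let n ≥ 4 and let ρ_lex = (S_1, …, S_n) be the lexicographic ranking of n unit squares with pairwise distinct centers c_1 < c_2 < ⋯ < c_n (lexicographically). Then the visibility graph G(ρ_lex) has at most 3n − 7 edges, i.e. the number of pairs (i, k) with i < k such that S_i sees S_k under ρ_lex is at most 3n − 7. -/

import Mathlib

/-- The unit square with center `c`: the closed ℓ∞-ball of radius 1
(the product metric on `ℝ × ℝ` is the sup metric). -/
def UnitSq (c : ℝ × ℝ) : Set (ℝ × ℝ) := Metric.closedBall c 1

/-- Strict lexicographic order on `ℝ × ℝ`. -/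
def LexLt (a b : ℝ × ℝ) : Prop := a.1 < b.1 ∨ (a.1 = b.1 ∧ a.2 < b.2)

/-- `p` lies in the axis-parallel rectangle spanned by `a` and `b`. -/
def InRect (p a b : ℝ × ℝ) : Prop :=
  min a.1 b.1 ≤ p.1 ∧ p.1 ≤ max a.1 b.1 ∧ min a.2 b.2 ≤ p.2 ∧ p.2 ≤ max a.2 b.2

/-- In the ranking given by the sequence of centers `c`, square `i` sees square `k`:
some point of `S(c i) ∩ S(c k)` avoids all squares ranked strictly between them. -/
def Sees {n : ℕ} (c : Fin n → ℝ × ℝ) (i k : Fin n) : Prop :=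
  ∃ p ∈ UnitSq (c i) ∩ UnitSq (c k), ∀ j : Fin n, i < j → j < k → p ∉ UnitSq (c j)

namespace Stmt10Aux

open Classical

variable {n : ℕ}

/-- 1-D witness predicate. -/
def Wit (y : Fin n → ℝ) (i k : Fin n) (t : ℝ) : Prop :=
  |t - y i| ≤ 1 ∧ |t - y k| ≤ 1 ∧ ∀ j : Fin n, i < j → j < k → 1 < |t - y j|

/-- processing key -/
def κ (y : Fin n → ℝ) (m : Fin n) : ℝ ×ₗ ℕ := toLex (y m, (m : ℕ))

lemma κ_lt_iff (y : Fin n → ℝ) (a b : Fin n) :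
    κ y a < κ y b ↔ y a < y b ∨ (y a = y b ∧ a < b) := by
  rw [κ, κ, Prod.Lex.lt_iff]
  simp only [ofLex_toLex, Fin.lt_iff_val_lt_val]

lemma κ_inj (y : Fin n → ℝ) : Function.Injective (κ y) := by
  intro a b hab
  have := congrArg (fun p => (ofLex p).2) hab
  simpa [κ, Fin.val_injective.eq_iff] using this

lemma y_le_of_κ_lt {y : Fin n → ℝ} {a b : Fin n} (h : κ y a < κ y b) : y a ≤ y b := by
  rcases (κ_lt_iff y a b).1 h with h | h
  · exact h.le
  · exact h.1.le

lemma κ_lt_of_y_lt {y : Fin n → ℝ} {a b : Fin n} (h : y a < y b) : κ y a < κ y b :=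
  (κ_lt_iff y a b).2 (Or.inl h)

/-- the endpoint with larger key -/
noncomputable def hend (y : Fin n → ℝ) (i k : Fin n) : Fin n := if κ y i < κ y k then k else i
noncomputable def lend (y : Fin n → ℝ) (i k : Fin n) : Fin n := if κ y i < κ y k then i else k

lemma hend_or (y : Fin n → ℝ) (i k : Fin n) :
    (hend y i k = i ∧ lend y i k = k) ∨ (hend y i k = k ∧ lend y i k = i) := by
  unfold hend lend; split <;> simp

lemma κ_of_not_lt {y : Fin n → ℝ} {i k : Fin n} (hik : i ≠ k) (h : ¬ κ y i < κ y k) :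
    κ y k < κ y i := by
  rcases lt_trichotomy (κ y k) (κ y i) with h' | h' | h'
  · exact h'
  · exact absurd (κ_inj y h'.symm) hik
  · exact absurd h' h

lemma y_le_hend (y : Fin n → ℝ) (i k : Fin n) (hik : i ≠ k) :
    y i ≤ y (hend y i k) ∧ y k ≤ y (hend y i k) := by
  unfold hend; split
  case isTrue h => exact ⟨y_le_of_κ_lt h, le_refl _⟩
  case isFalse h => exact ⟨le_refl _, y_le_of_κ_lt (κ_of_not_lt hik h)⟩

lemma κ_lend_lt_hend (y : Fin n → ℝ) (i k : Fin n) (hik : i ≠ k) :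
    κ y (lend y i k) < κ y (hend y i k) := by
  unfold hend lend; split
  case isTrue h => exact h
  case isFalse h => exact κ_of_not_lt hik h



section Core

variable {y : Fin n → ℝ} {i k : Fin n}

lemma wit_i {t : ℝ} (ht : Wit y i k t) : y i - 1 ≤ t ∧ t ≤ y i + 1 := by
  have := abs_le.1 ht.1; constructor <;> linarith [this.1, this.2]

lemma wit_k {t : ℝ} (ht : Wit y i k t) : y k - 1 ≤ t ∧ t ≤ y k + 1 := by
  have := abs_le.1 ht.2.1; constructor <;> linarith [this.1, this.2]

/-- every strictly-between square is strictly below both or strictly above both -/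
lemma dichotomy {t : ℝ} (ht : Wit y i k t) {j : Fin n} (h1 : i < j) (h2 : j < k) :
    (y j < y i ∧ y j < y k) ∨ (y i < y j ∧ y k < y j) := by
  have hb := ht.2.2 j h1 h2
  have hi := wit_i ht; have hk := wit_k ht
  rcases lt_abs.1 hb with h | h
  · left; constructor <;> linarith [hi.2, hk.2]
  · right; constructor <;> linarith [hi.1, hk.1]

/-- the set of blockers strictly below both endpoints -/
noncomputable def Bset (y : Fin n → ℝ) (i k : Fin n) : Finset (Fin n) :=
  Finset.univ.filter (fun j => i < j ∧ j < k ∧ y j < y i ∧ y j < y k)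

lemma mem_Bset {j : Fin n} :
    j ∈ Bset y i k ↔ i < j ∧ j < k ∧ y j < y i ∧ y j < y k := by
  simp [Bset]

/-- the blocker below with maximal key (junk value if none) -/
noncomputable def jstar (y : Fin n → ℝ) (i k : Fin n) : Fin n :=
  if h : (Bset y i k).Nonempty then
    ((Bset y i k).exists_max_image (κ y) h).choose
  else i

lemma jstar_spec (h : (Bset y i k).Nonempty) :
    jstar y i k ∈ Bset y i k ∧ ∀ j ∈ Bset y i k, κ y j ≤ κ y (jstar y i k) := by
  rw [jstar, dif_pos h]
  obtain ⟨hm, hmax⟩ := ((Bset y i k).exists_max_image (κ y) h).choose_spec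
  exact ⟨hm, hmax⟩

lemma y_le_jstar (h : (Bset y i k).Nonempty) {j : Fin n} (hj : j ∈ Bset y i k) :
    y j ≤ y (jstar y i k) := by
  have := (jstar_spec h).2 j hj
  rcases this.lt_or_eq with h' | h'
  · exact y_le_of_κ_lt h'
  · exact le_of_eq (congrArg y (κ_inj y h'))

/-- in Case 2 the below-blocker set is nonempty -/
lemma Bset_nonempty (hik : i < k) {t : ℝ} (ht : Wit y i k t)
    (hnw : ¬ Wit y i k (y (hend y i k) - 1)) : (Bset y i k).Nonempty := by
  by_contra hempty
  rw [Finset.not_nonempty_iff_eq_empty] at hempty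
  apply hnw
  have hne : i ≠ k := ne_of_lt hik
  have hmax := y_le_hend y i k hne
  have hth : y (hend y i k) - 1 ≤ t := by
    rcases hend_or y i k with ⟨h1, _⟩ | ⟨h1, _⟩
    · rw [h1]; exact (wit_i ht).1
    · rw [h1]; exact (wit_k ht).1
  refine ⟨?_, ?_, ?_⟩
  · rw [abs_le]; constructor <;> nlinarith [hmax.1, (wit_i ht).2]
  · rw [abs_le]; constructor <;> nlinarith [hmax.2, (wit_k ht).2]
  · intro j h1 h2
    rcases dichotomy ht h1 h2 with hlow | hhigh
    · exfalso
      have : j ∈ Bset y i k := mem_Bset.2 ⟨h1, h2, hlow.1, hlow.2⟩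
      rw [hempty] at this; exact absurd this (Finset.notMem_empty j)
    · have : y (hend y i k) < y j := by
        rcases hend_or y i k with ⟨h3, _⟩ | ⟨h3, _⟩
        · rw [h3]; exact hhigh.1
        · rw [h3]; exact hhigh.2
      rw [lt_abs]; right; linarith

/-- in Case 2 the maximal below-blocker reaches up to the start of the high window -/
lemma case2_bound (hik : i < k) {t : ℝ} (ht : Wit y i k t)
    (hnw : ¬ Wit y i k (y (hend y i k) - 1)) :
    y (hend y i k) - 1 ≤ y (jstar y i k) + 1 := by
  by_contra hcon
  push_neg at hcon
  apply hnw
  have hB := Bset_nonempty hik ht hnw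
  have hne : i ≠ k := ne_of_lt hik
  have hmax := y_le_hend y i k hne
  have hth : y (hend y i k) - 1 ≤ t := by
    rcases hend_or y i k with ⟨h1, _⟩ | ⟨h1, _⟩
    · rw [h1]; exact (wit_i ht).1
    · rw [h1]; exact (wit_k ht).1
  refine ⟨?_, ?_, ?_⟩
  · rw [abs_le]; constructor <;> nlinarith [hmax.1, (wit_i ht).2]
  · rw [abs_le]; constructor <;> nlinarith [hmax.2, (wit_k ht).2]
  · intro j h1 h2
    rcases dichotomy ht h1 h2 with hlow | hhigh
    · have hj : j ∈ Bset y i k := mem_Bset.2 ⟨h1, h2, hlow.1, hlow.2⟩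
      have := y_le_jstar hB hj
      rw [lt_abs]; left; linarith
    · have : y (hend y i k) < y j := by
        rcases hend_or y i k with ⟨h3, _⟩ | ⟨h3, _⟩
        · rw [h3]; exact hhigh.1
        · rw [h3]; exact hhigh.2
      rw [lt_abs]; right; linarith

/-- any witness is above the top of the maximal below-blocker -/
lemma wit_gt_jstar {t : ℝ} (ht : Wit y i k t) (hB : (Bset y i k).Nonempty) :
    y (jstar y i k) + 1 < t := by
  have hj := (jstar_spec hB).1
  rw [mem_Bset] at hj
  have hb := ht.2.2 _ hj.1 hj.2.1
  rcases lt_abs.1 hb with h | h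
  · linarith
  · exfalso; have := (wit_i ht).1; linarith [hj.2.2.1]

/-- downward extension of witnesses in Case 2 -/
lemma wit_ext (hik : i < k) {t s : ℝ} (ht : Wit y i k t)
    (hnw : ¬ Wit y i k (y (hend y i k) - 1))
    (hs1 : y (jstar y i k) + 1 < s) (hs2 : s ≤ t) : Wit y i k s := by
  have hB := Bset_nonempty hik ht hnw
  have hb2 := case2_bound hik ht hnw
  have hne : i ≠ k := ne_of_lt hik
  have hmax := y_le_hend y i k hne
  refine ⟨?_, ?_, ?_⟩
  · rw [abs_le]; constructor <;> nlinarith [hmax.1, (wit_i ht).2]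
  · rw [abs_le]; constructor <;> nlinarith [hmax.2, (wit_k ht).2]
  · intro j h1 h2
    have hb := ht.2.2 j h1 h2
    rcases lt_abs.1 hb with h | h
    · -- y j < t - 1 hence j is a below blocker
      have hji : y j < y i := by linarith [(wit_i ht).2]
      have hjk : y j < y k := by linarith [(wit_k ht).2]
      have hj : j ∈ Bset y i k := mem_Bset.2 ⟨h1, h2, hji, hjk⟩
      have := y_le_jstar hB hj
      rw [lt_abs]; left; linarith
    · rw [lt_abs]; right; linarith

end Core



/-- the edge set of the 1-D visibility structure -/
def ESet (y : Fin n → ℝ) : Set (Fin n × Fin n) :=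
  {p | p.1 < p.2 ∧ ∃ t, Wit y p.1 p.2 t}

open Classical in
noncomputable def chi (y : Fin n → ℝ) (p : Fin n × Fin n) : (Fin n × Bool) ⊕ (Fin n) :=
  if Wit y p.1 p.2 (y (hend y p.1 p.2) - 1)
  then Sum.inl (hend y p.1 p.2, decide (hend y p.1 p.2 = p.1))
  else Sum.inr (jstar y p.1 p.2)

section Inj

variable {y : Fin n → ℝ}

lemma clash_right {i k i' k' : Fin n} {s : ℝ} (h1 : i' < k) (h2 : k < k')
    (hw : Wit y i k s) (hw' : Wit y i' k' s) : False := by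
  have hb := hw'.2.2 k h1 h2
  have := hw.2.1
  rw [lt_abs] at hb
  rw [abs_le] at this
  rcases hb with h | h <;> linarith [this.1, this.2]

lemma clash_left {i k i' k' : Fin n} {s : ℝ} (h1 : i < i') (h2 : i' < k)
    (hw : Wit y i k s) (hw' : Wit y i' k' s) : False := by
  have hb := hw.2.2 i' h1 h2
  have := hw'.1
  rw [lt_abs] at hb
  rw [abs_le] at this
  rcases hb with h | h <;> linarith [this.1, this.2]

lemma chi_injOn : Set.InjOn (chi y) (ESet y) := by
  rintro ⟨i, k⟩ he ⟨i', k'⟩ he' heq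
  obtain ⟨hik, t, ht⟩ := he
  obtain ⟨hik', t', ht'⟩ := he'
  simp only at hik hik' ht ht'
  by_cases w : Wit y i k (y (hend y i k) - 1) <;>
    by_cases w' : Wit y i' k' (y (hend y i' k') - 1) <;>
    simp only [chi, w, w', if_pos, if_neg, not_false_iff] at heq
  · -- both Case 1
    obtain ⟨hh, hb⟩ : hend y i k = hend y i' k' ∧
        (decide (hend y i k = i) = decide (hend y i' k' = i')) := by
      rcases Sum.inl.inj heq with h
      exact ⟨congrArg Prod.fst h, congrArg Prod.snd h⟩
    rcases hend_or y i k with ⟨e1, _⟩ | ⟨e1, _⟩ <;>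
      rcases hend_or y i' k' with ⟨e2, _⟩ | ⟨e2, _⟩
    · -- hend = i, hend' = i'
      have w1 : Wit y i k (y i - 1) := by rw [e1] at w; exact w
      have w2 : Wit y i' k' (y i' - 1) := by rw [e2] at w'; exact w'
      have hii : i = i' := by rw [e1] at hh; rw [e2] at hh; exact hh
      subst hii
      rcases lt_trichotomy k k' with hkk | hkk | hkk
      · exact (clash_right hik hkk w1 w2).elim
      · rw [hkk]
      · exact (clash_right hik' hkk w2 w1).elim
    · exfalso
      rw [e1, e2] at hb
      rw [decide_eq_decide] at hb
      exact absurd (hb.1 rfl) (ne_of_gt hik')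
    · exfalso
      rw [e1, e2] at hb
      rw [decide_eq_decide] at hb
      exact absurd (hb.2 rfl) (ne_of_gt hik)
    · -- hend = k, hend' = k'
      have w1 : Wit y i k (y k - 1) := by rw [e1] at w; exact w
      have w2 : Wit y i' k' (y k' - 1) := by rw [e2] at w'; exact w'
      have hkk : k = k' := by rw [e1] at hh; rw [e2] at hh; exact hh
      subst hkk
      rcases lt_trichotomy i i' with hii | hii | hii
      · exact (clash_left hii hik' w1 w2).elim
      · rw [hii]
      · exact (clash_left hii hik w2 w1).elim
  · exact absurd heq (by simp)
  · exact absurd heq (by simp)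
  · -- both Case 2
    have hj := Sum.inr.inj heq
    have hB : (Bset y i k).Nonempty := Bset_nonempty hik ht w
    have hB' : (Bset y i' k').Nonempty := Bset_nonempty hik' ht' w'
    have jmem := mem_Bset.1 (jstar_spec hB).1
    have jmem' := mem_Bset.1 (jstar_spec hB').1
    have hgt := wit_gt_jstar ht hB
    have hgt' := wit_gt_jstar ht' hB'
    set s := min t t' with hs
    have hs1 : y (jstar y i k) + 1 < s := lt_min hgt (by rw [hj]; exact hgt')
    have hs1' : y (jstar y i' k') + 1 < s := by rw [← hj]; exact hs1
    have ws : Wit y i k s := wit_ext hik ht w hs1 (min_le_left _ _)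
    have ws' : Wit y i' k' s := wit_ext hik' ht' w' hs1' (min_le_right _ _)
    rcases lt_trichotomy k k' with hkk | hkk | hkk
    · exact (clash_right (lt_trans (hj ▸ jmem'.1 : i' < jstar y i k) jmem.2.1) hkk ws ws').elim
    · subst hkk
      rcases lt_trichotomy i i' with hii | hii | hii
      · exact (clash_left hii hik' ws ws').elim
      · rw [hii]
      · exact (clash_left hii hik ws' ws).elim
    · exact (clash_right (lt_trans (hj ▸ jmem.1 : i < jstar y i' k') jmem'.2.1) hkk ws' ws).elim

end Inj



section Count

variable {y : Fin n → ℝ}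

lemma exists_κ_min (y : Fin n → ℝ) (s : Finset (Fin n)) (hs : s.Nonempty) :
    ∃ a ∈ s, ∀ m ∈ s, m ≠ a → κ y a < κ y m := by
  obtain ⟨a, ha, hmin⟩ := s.exists_min_image (κ y) hs
  exact ⟨a, ha, fun m hm hne => lt_of_le_of_ne (hmin m hm) (fun h => hne (κ_inj y h.symm))⟩

lemma exists_κ_max (y : Fin n → ℝ) (s : Finset (Fin n)) (hs : s.Nonempty) :
    ∃ a ∈ s, ∀ m ∈ s, m ≠ a → κ y m < κ y a := by
  obtain ⟨a, ha, hmax⟩ := s.exists_max_image (κ y) hs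
  exact ⟨a, ha, fun m hm hne => lt_of_le_of_ne (hmax m hm) (fun h => hne (κ_inj y h))⟩

lemma exists_spare (hn : 4 ≤ n) (a b c : Fin n) : ∃ m : Fin n, m ≠ a ∧ m ≠ b ∧ m ≠ c := by
  classical
  have hcard : ({a, b, c} : Finset (Fin n)).card ≤ 3 := by
    apply le_trans (Finset.card_insert_le _ _)
    have := Finset.card_insert_le b ({c} : Finset (Fin n))
    simp at this ⊢
    omega
  have huniv : (Finset.univ : Finset (Fin n)).card = n := by simp
  have : 0 < (Finset.univ \ ({a, b, c} : Finset (Fin n))).card := by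
    rw [Finset.card_sdiff_of_subset (Finset.subset_univ _)]
    omega
  obtain ⟨m, hm⟩ := Finset.card_pos.1 this
  rw [Finset.mem_sdiff] at hm
  have := hm.2
  simp only [Finset.mem_insert, Finset.mem_singleton, not_or] at this
  exact ⟨m, this.1, this.2.1, this.2.2⟩

lemma length_le_card {α : Type*} [DecidableEq α] {l : List α} {s : Finset α}
    (hn : l.Nodup) (hs : ∀ x ∈ l, x ∈ s) : l.length ≤ s.card := by
  rw [← List.toFinset_card_of_nodup hn]
  exact Finset.card_le_card (fun x hx => hs x (List.mem_toFinset.1 hx))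

theorem ESet_ncard_le (hn : 4 ≤ n) (y : Fin n → ℝ) : (ESet y).ncard ≤ 3 * n - 7 := by
  classical
  have hn0 : 0 < n := by omega
  -- order statistics
  have hu : (Finset.univ : Finset (Fin n)).Nonempty := ⟨⟨0, hn0⟩, Finset.mem_univ _⟩
  obtain ⟨F, -, hF0⟩ := exists_κ_min y Finset.univ hu
  have hF : ∀ m, m ≠ F → κ y F < κ y m := fun m hm => hF0 m (Finset.mem_univ m) hm
  have heF : (Finset.univ.erase F).Nonempty := by
    rw [← Finset.card_pos, Finset.card_erase_of_mem (Finset.mem_univ F)]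
    simp; omega
  obtain ⟨S, hSmem, hS0⟩ := exists_κ_min y (Finset.univ.erase F) heF
  have hSF : S ≠ F := (Finset.mem_erase.1 hSmem).1
  have hS : ∀ m, m ≠ F → m ≠ S → κ y S < κ y m := fun m h1 h2 =>
    hS0 m (Finset.mem_erase.2 ⟨h1, Finset.mem_univ m⟩) h2
  obtain ⟨L, -, hL0⟩ := exists_κ_max y Finset.univ hu
  have hL : ∀ m, m ≠ L → κ y m < κ y L := fun m hm => hL0 m (Finset.mem_univ m) hm
  have heL : (Finset.univ.erase L).Nonempty := by
    rw [← Finset.card_pos, Finset.card_erase_of_mem (Finset.mem_univ L)]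
    simp; omega
  obtain ⟨K, hKmem, hK0⟩ := exists_κ_max y (Finset.univ.erase L) heL
  have hKL : K ≠ L := (Finset.mem_erase.1 hKmem).1
  have hK : ∀ m, m ≠ L → m ≠ K → κ y m < κ y K := fun m h1 h2 =>
    hK0 m (Finset.mem_erase.2 ⟨h1, Finset.mem_univ m⟩) h2
  -- distinctness
  have hFL : F ≠ L := by
    intro h
    obtain ⟨m, hm1, hm2, -⟩ := exists_spare hn F L L
    exact absurd ((hF m hm1).trans (hL m hm2)) (by rw [h]; exact lt_irrefl _)
  have hFK : F ≠ K := by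
    intro h
    obtain ⟨m, hm1, hm2, hm3⟩ := exists_spare hn F L K
    exact absurd ((hF m hm1).trans (hK m hm2 hm3)) (by rw [h]; exact lt_irrefl _)
  have hSL : S ≠ L := by
    intro h
    obtain ⟨m, hm1, hm2, hm3⟩ := exists_spare hn F S L
    exact absurd ((hS m hm1 hm2).trans (hL m hm3)) (by rw [h]; exact lt_irrefl _)
  have hSK : S ≠ K := by
    intro h
    obtain ⟨m, hm1, hm2, hm3⟩ := exists_spare hn F S L
    exact absurd ((hS m hm1 hm2).trans (hK m hm3 (h ▸ hm2))) (by rw [h]; exact lt_irrefl _)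
  -- top and bottom
  set T : Fin n := ⟨n - 1, by omega⟩ with hT
  set Bt : Fin n := ⟨0, hn0⟩ with hBt
  have hTBt : T ≠ Bt := by
    simp only [hT, hBt, ne_eq, Fin.mk.injEq]
    omega
  -- the forbidden set
  set Forb : Finset ((Fin n × Bool) ⊕ (Fin n)) :=
    {Sum.inl (F, true), Sum.inl (F, false), Sum.inl (S, !(decide (S < F))),
     Sum.inl (T, true), Sum.inl (Bt, false),
     Sum.inr L, Sum.inr K, Sum.inr T, Sum.inr Bt} with hForb
  -- χ lands outside the forbidden set
  have hmaps : ∀ p ∈ ESet y, chi y p ∈ ((Finset.univ \ Forb : Finset _) : Set _) := by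
    rintro ⟨i, k⟩ hp
    obtain ⟨hik, t, ht⟩ := hp
    simp only at hik ht
    have hikne : i ≠ k := ne_of_lt hik
    rw [Finset.coe_sdiff, Set.mem_diff]
    refine ⟨by simp, ?_⟩
    by_cases w : Wit y i k (y (hend y i k) - 1)
    · have hchieq : chi y (i, k) = Sum.inl (hend y i k, decide (hend y i k = i)) := by
        simp [chi, w]
      -- facts about hend
      have hlh := κ_lend_lt_hend y i k hikne
      have hlne : lend y i k ≠ hend y i k := by
        intro h; rw [h] at hlh; exact lt_irrefl _ hlh
      have hne_F : hend y i k ≠ F := by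
        intro h
        have := hF (lend y i k) (by rw [← h]; exact hlne)
        rw [← h] at this
        exact lt_asymm hlh this
      have hS_bool : hend y i k = S → decide (hend y i k = i) = decide (S < F) := by
        intro h
        have hlF : lend y i k = F := by
          by_contra hlF
          have := hS (lend y i k) hlF (by rw [← h]; exact hlne)
          rw [← h] at this
          exact lt_asymm hlh this
        rcases hend_or y i k with ⟨e1, e2⟩ | ⟨e1, e2⟩
        · -- hend = i = S, lend = k = F, so S < F
          have hif : S < F := by rw [← h, ← hlF, e1, e2]; exact hik
          rw [decide_eq_decide]
          constructor
          · intro _; exact hif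
          · intro _; exact e1
        · -- hend = k = S, lend = i = F, so F < S hence ¬ S < F, and hend ≠ i
          have hif : F < S := by rw [← h, ← hlF, e1, e2]; exact hik
          have h1 : ¬ (hend y i k = i) := by
            rw [e1]; exact fun hh => hikne hh.symm
          have h2 : ¬ (S < F) := fun hh => lt_asymm hif hh
          simp [h1, h2]
      have hT_bool : hend y i k = T → decide (hend y i k = i) ≠ true := by
        intro h hb
        rw [decide_eq_true_eq] at hb
        have : i = T := by rw [← hb, h]
        have : (k : ℕ) < n := k.isLt
        have hik' : (i : ℕ) < (k : ℕ) := hik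
        rw [‹i = T›] at hik'
        simp only [hT] at hik'
        omega
      have hB_bool : hend y i k = Bt → decide (hend y i k = i) ≠ false := by
        intro h hb
        rw [decide_eq_false_iff_not] at hb
        have hk : hend y i k = k := by
          rcases hend_or y i k with ⟨e1, -⟩ | ⟨e1, -⟩
          · exact absurd e1 hb
          · exact e1
        have : k = Bt := by rw [← hk, h]
        have hik' : (i : ℕ) < (k : ℕ) := hik
        rw [this] at hik'
        simp only [hBt] at hik'
        omega
      rw [hchieq, hForb]
      simp only [Finset.coe_insert, Set.mem_insert_iff, Finset.coe_singleton,
        Set.mem_singleton_iff, not_or]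
      refine ⟨?_, ?_, ?_, ?_, ?_, by simp, by simp, by simp, by simp⟩
      · simp only [Sum.inl.injEq, Prod.mk.injEq, not_and]
        intro h1; exact absurd h1 hne_F
      · simp only [Sum.inl.injEq, Prod.mk.injEq, not_and]
        intro h1; exact absurd h1 hne_F
      · simp only [Sum.inl.injEq, Prod.mk.injEq, not_and]
        intro h1 h2
        have h3 := hS_bool h1
        rw [h3] at h2
        exact (Bool.eq_not_self _).1 h2
      · simp only [Sum.inl.injEq, Prod.mk.injEq, not_and]
        intro h1 h2; exact hT_bool h1 (by rw [h2])
      · simp only [Sum.inl.injEq, Prod.mk.injEq, not_and]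
        intro h1 h2; exact hB_bool h1 (by rw [h2])
    · have hchieq : chi y (i, k) = Sum.inr (jstar y i k) := by
        simp [chi, w]
      have hB : (Bset y i k).Nonempty := Bset_nonempty hik ht w
      have jmem := mem_Bset.1 (jstar_spec hB).1
      set j := jstar y i k with hj
      have hyji : y j < y i := jmem.2.2.1
      have hyjk : y j < y k := jmem.2.2.2
      have hjL : j ≠ L := by
        intro h
        have hij : i ≠ j := ne_of_lt jmem.1
        have hiL : i ≠ L := by rw [← h]; exact hij
        exact lt_asymm (κ_lt_of_y_lt hyji) (h ▸ hL i hiL)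
      have hjK : j ≠ K := by
        intro h
        have hiK : i ≠ K := by rw [← h]; exact ne_of_lt jmem.1
        have hkK : k ≠ K := by rw [← h]; exact (ne_of_lt jmem.2.1).symm
        have hiL2 : i = L := by
          by_contra hiL
          exact lt_asymm (κ_lt_of_y_lt hyji) (h ▸ hK i hiL hiK)
        have hkL2 : k = L := by
          by_contra hkL
          exact lt_asymm (κ_lt_of_y_lt hyjk) (h ▸ hK k hkL hkK)
        exact hikne (hiL2.trans hkL2.symm)
      have hjT : j ≠ T := by
        intro h
        have h1 : (j : ℕ) < (k : ℕ) := jmem.2.1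
        have h2 : (k : ℕ) < n := k.isLt
        rw [h] at h1
        simp only [hT] at h1
        omega
      have hjBt : j ≠ Bt := by
        intro h
        have h1 : (i : ℕ) < (j : ℕ) := jmem.1
        rw [h] at h1
        simp only [hBt] at h1
        omega
      rw [hchieq, hForb]
      simp only [Finset.coe_insert, Set.mem_insert_iff, Finset.coe_singleton,
        Set.mem_singleton_iff, not_or]
      refine ⟨by simp, by simp, by simp, by simp, by simp, ?_, ?_, ?_, ?_⟩
      · simp only [Sum.inr.injEq]; exact hjL
      · simp only [Sum.inr.injEq]; exact hjK
      · simp only [Sum.inr.injEq]; exact hjT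
      · simp only [Sum.inr.injEq]; exact hjBt
  -- counting
  have hcard7 : 7 ≤ Forb.card := by
    by_cases hTm : T = F ∨ T = S <;> by_cases hBm : Bt = F ∨ Bt = S
    · -- both T, Bt among {F, S}: use the four inr slots
      have hTn : T ≠ L ∧ T ≠ K := by
        rcases hTm with h | h
        · exact ⟨h ▸ hFL, h ▸ hFK⟩
        · exact ⟨h ▸ hSL, h ▸ hSK⟩
      have hBn : Bt ≠ L ∧ Bt ≠ K := by
        rcases hBm with h | h
        · exact ⟨h ▸ hFL, h ▸ hFK⟩
        · exact ⟨h ▸ hSL, h ▸ hSK⟩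
      have := length_le_card (l := [Sum.inl (F, true), Sum.inl (F, false),
        Sum.inl (S, !(decide (S < F))), Sum.inr L, Sum.inr K, Sum.inr T, Sum.inr Bt])
        (s := Forb) ?_ ?_
      · simpa using this
      · simp [List.nodup_cons, hSF.symm, hKL, hTn.1, hTn.2, hBn.1, hBn.2, hTBt,
          hKL.symm, Ne.symm hTn.1, Ne.symm hTn.2, Ne.symm hBn.1, Ne.symm hBn.2, Ne.symm hTBt]
      · intro x hx
        fin_cases hx <;> simp [hForb]
    · -- T ∈ {F,S}, Bt ∉ {F,S}
      push_neg at hBm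
      have hTn : T ≠ L ∧ T ≠ K := by
        rcases hTm with h | h
        · exact ⟨h ▸ hFL, h ▸ hFK⟩
        · exact ⟨h ▸ hSL, h ▸ hSK⟩
      have := length_le_card (l := [Sum.inl (F, true), Sum.inl (F, false),
        Sum.inl (S, !(decide (S < F))), Sum.inl (Bt, false), Sum.inr L, Sum.inr K, Sum.inr T])
        (s := Forb) ?_ ?_
      · simpa using this
      · simp [List.nodup_cons, hSF.symm, hKL, hKL.symm, hTn.1, hTn.2, hBm.1, hBm.2,
          Ne.symm hBm.1, Ne.symm hBm.2, Ne.symm hTn.1, Ne.symm hTn.2]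
      · intro x hx
        fin_cases hx <;> simp [hForb]
    · -- T ∉ {F,S}, Bt ∈ {F,S}
      push_neg at hTm
      have hBn : Bt ≠ L ∧ Bt ≠ K := by
        rcases hBm with h | h
        · exact ⟨h ▸ hFL, h ▸ hFK⟩
        · exact ⟨h ▸ hSL, h ▸ hSK⟩
      have := length_le_card (l := [Sum.inl (F, true), Sum.inl (F, false),
        Sum.inl (S, !(decide (S < F))), Sum.inl (T, true), Sum.inr L, Sum.inr K, Sum.inr Bt])
        (s := Forb) ?_ ?_
      · simpa using this
      · simp [List.nodup_cons, hSF.symm, hKL, hKL.symm, hTm.1, hTm.2, hBn.1, hBn.2,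
          Ne.symm hTm.1, Ne.symm hTm.2, Ne.symm hBn.1, Ne.symm hBn.2]
      · intro x hx
        fin_cases hx <;> simp [hForb]
    · -- neither
      push_neg at hTm; push_neg at hBm
      have := length_le_card (l := [Sum.inl (F, true), Sum.inl (F, false),
        Sum.inl (S, !(decide (S < F))), Sum.inl (T, true), Sum.inl (Bt, false),
        Sum.inr L, Sum.inr K]) (s := Forb) ?_ ?_
      · simpa using this
      · simp [List.nodup_cons, hSF.symm, hKL, hKL.symm, hTm.1, hTm.2, hBm.1, hBm.2, hTBt,
          Ne.symm hTm.1, Ne.symm hTm.2, Ne.symm hBm.1, Ne.symm hBm.2, Ne.symm hTBt]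
      · intro x hx
        fin_cases hx <;> simp [hForb]
  have hfin : (((Finset.univ \ Forb : Finset _) : Set ((Fin n × Bool) ⊕ (Fin n)))).Finite :=
    Set.toFinite _
  have hle := Set.ncard_le_ncard_of_injOn (chi y) hmaps chi_injOn hfin
  rw [Set.ncard_coe_finset, Finset.card_sdiff_of_subset (Finset.subset_univ _)] at hle
  have hcardU : (Finset.univ : Finset ((Fin n × Bool) ⊕ (Fin n))).card = 3 * n := by
    simp [Finset.card_univ]
    ring
  rw [hcardU] at hle
  omega

end Count

end Stmt10Aux


/-- Theorem 3: for `n ≥ 4`, the visibility graph of the lexicographic ranking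
of `n` unit squares has at most `3n - 7` edges. -/
theorem stmt_10 {n : ℕ} (hn : 4 ≤ n) (c : Fin n → ℝ × ℝ)
    (hlex : ∀ i j : Fin n, i < j → LexLt (c i) (c j)) :
    {p : Fin n × Fin n | p.1 < p.2 ∧ Sees c p.1 p.2}.ncard ≤ 3 * n - 7 := by
  set y : Fin n → ℝ := fun m => (c m).2 with hy
  have hxm : ∀ a b : Fin n, a < b → (c a).1 ≤ (c b).1 := by
    intro a b hab
    rcases hlex a b hab with h | h
    · exact h.le
    · exact h.1.le
  have hsub : {p : Fin n × Fin n | p.1 < p.2 ∧ Sees c p.1 p.2} ⊆ Stmt10Aux.ESet y := by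
    rintro ⟨i, k⟩ ⟨hik, p, hp, hblock⟩
    simp only at hik hp hblock
    have hpi : dist p (c i) ≤ 1 := Metric.mem_closedBall.1 hp.1
    have hpk : dist p (c k) ≤ 1 := Metric.mem_closedBall.1 hp.2
    have hpi1 : |p.1 - (c i).1| ≤ 1 := by
      rw [← Real.dist_eq]
      exact le_trans (le_max_left _ _) (le_of_eq_of_le (Prod.dist_eq).symm hpi)
    have hpi2 : |p.2 - (c i).2| ≤ 1 := by
      rw [← Real.dist_eq]
      exact le_trans (le_max_right _ _) (le_of_eq_of_le (Prod.dist_eq).symm hpi)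
    have hpk1 : |p.1 - (c k).1| ≤ 1 := by
      rw [← Real.dist_eq]
      exact le_trans (le_max_left _ _) (le_of_eq_of_le (Prod.dist_eq).symm hpk)
    have hpk2 : |p.2 - (c k).2| ≤ 1 := by
      rw [← Real.dist_eq]
      exact le_trans (le_max_right _ _) (le_of_eq_of_le (Prod.dist_eq).symm hpk)
    refine ⟨hik, p.2, hpi2, hpk2, ?_⟩
    intro j h1 h2
    have hb := hblock j h1 h2
    have hbd : 1 < dist p (c j) := by
      by_contra hcon
      push_neg at hcon
      exact hb (Metric.mem_closedBall.2 hcon)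
    rw [Prod.dist_eq] at hbd
    have hj1 : dist p.1 (c j).1 ≤ 1 := by
      rw [Real.dist_eq, abs_le]
      have hxa := hxm i j h1
      have hxb := hxm j k h2
      rw [abs_le] at hpi1 hpk1
      constructor <;> linarith [hpi1.1, hpi1.2, hpk1.1, hpk1.2]
    have : 1 < dist p.2 (c j).2 := by
      rcases max_cases (dist p.1 (c j).1) (dist p.2 (c j).2) with ⟨hm, -⟩ | ⟨hm, -⟩
      · rw [hm] at hbd; linarith
      · rw [hm] at hbd; exact hbd
    rw [Real.dist_eq] at this
    exact this
  calc {p : Fin n × Fin n | p.1 < p.2 ∧ Sees c p.1 p.2}.ncard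
      ≤ (Stmt10Aux.ESet y).ncard := Set.ncard_le_ncard hsub (Set.toFinite _)
    _ ≤ 3 * n - 7 := Stmt10Aux.ESet_ncard_le hn y
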